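/- arXiv:1208.3939 — 2 statements merged into one kernel-verified Lean document; each statement's English description precedes it below -/
import Mathlib

section
/- The linear mechanism on [L,H] is 1/(H-L)-strongly truthful: for all v, ṽ ∈ [L,H], u_v(v) - u_v(ṽ) ≥ (1/(2(H-L)))·(ṽ - v)². -/
/-- The linear mechanism on `[L,H]` is `1/(H-L)`-strongly truthful:
with `u_v(w) = (v - w)·a(w) + u(w)` where `a(w) = (w-L)/(H-L)` and
`u(w) = (w-L)²/(2(H-L))`, for all `v, w ∈ [L,H]`,
`u_v(v) - u_v(w) ≥ (w-v)²/(2(H-L))`. -/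
theorem linear_mechanism_strongly_truthful
    (L H : ℝ) (hLH : L < H)
    (uv : ℝ → ℝ → ℝ)
    (huv : ∀ v w : ℝ, uv v w =
      (v - w) * ((w - L) / (H - L)) + (w - L) ^ 2 / (2 * (H - L))) :
    ∀ v ∈ Set.Icc L H, ∀ w ∈ Set.Icc L H,
      uv v v - uv v w ≥ 1 / (2 * (H - L)) * (w - v) ^ 2 := by
  intro v _ w _
  have h : H - L ≠ 0 := by linarith
  have : uv v v - uv v w = 1 / (2 * (H - L)) * (w - v) ^ 2 := by
    rw [huv, huv]; field_simp; ring
  rw [this]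
end

section
/- If M is a strictly truthful single-agent multi-alternative mechanism, then the scoring rule S(M) defined by s_i(p) = a_i(p) - P(p) for i ≥ 1 and s_0(p) = -P(p) is strictly proper: the forecaster's expected score Σ_{i≥0} p_i s_i(p̃) is strictly maximized at p̃ = p. -/
/-- If the mechanism `M = (a, P)` is strictly truthful on the
domain `D = {x | ∀ i, 0 ≤ x i ∧ ∑ x i ≤ 1}`, then the scoring rule `S(M)`
with `sᵢ(p) = aᵢ(p) - P(p)` for `i ≥ 1` and `s₀(p) = -P(p)` is strictly
proper: the expected score is strictly maximized by truthful reporting. -/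
theorem mechanism_to_scoring_rule
    (n : ℕ) (a : (Fin n → ℝ) → Fin n → ℝ) (P : (Fin n → ℝ) → ℝ)
    (D : Set (Fin n → ℝ))
    (hD : D = {x : Fin n → ℝ | (∀ i, 0 ≤ x i) ∧ ∑ i, x i ≤ 1})
    (htruth : ∀ x ∈ D, ∀ y ∈ D, y ≠ x →
      (∑ i, x i * a y i) - P y < (∑ i, x i * a x i) - P x)
    (s : (Fin n → ℝ) → Fin n → ℝ) (s₀ : (Fin n → ℝ) → ℝ)
    (hs : ∀ p i, s p i = a p i - P p)
    (hs₀ : ∀ p, s₀ p = -P p) :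
    ∀ p ∈ D, ∀ q ∈ D, q ≠ p →
      (∑ i, p i * s q i) + (1 - ∑ i, p i) * s₀ q <
      (∑ i, p i * s p i) + (1 - ∑ i, p i) * s₀ p := by
  intro p hp q hq hne
  have key : ∀ r : Fin n → ℝ,
      (∑ i, p i * s r i) + (1 - ∑ i, p i) * s₀ r =
      (∑ i, p i * a r i) - P r := by
    intro r
    simp only [hs, hs₀]
    simp only [mul_sub, Finset.sum_sub_distrib, ← Finset.sum_mul]
    ring
  rw [key p, key q]
  exact htruth p hp q hq hne
end
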